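/- Let α ∈ (0,1) and Q > 0. There exists κ > 0 such that for all real λ, Re[(λ² + iλQ)^α] ≥ κ |λ|^α (1 + |λ|)^α, where the principal branch of the power is used; in particular |exp(−t(λ² + iλQ)^α)| ≤ exp(−κ t |λ|^{α}) for all t > 0 and λ ∈ ℝ with |λ| ≤ 1, and more generally |exp(−t(λ²+iλQ)^α)| ≤ exp(−κ t |λ|^α (1+|λ|)^α) ≤ exp(−κ t |λ|^α). -/

import Mathlib

open Complex Real

theorem re_cpow_quadratic_phase_lower_bound
    (α Q : ℝ) (hα : α ∈ Set.Ioo (0:ℝ) 1) (hQ : 0 < Q) :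
    ∃ κ > (0:ℝ),
      (∀ l : ℝ,
        κ * |l| ^ α * (1 + |l|) ^ α ≤ ((((l:ℂ)^2 + Complex.I * l * Q)) ^ (α : ℂ)).re) ∧
      (∀ t : ℝ, 0 < t → ∀ l : ℝ,
        ‖Complex.exp (-(t:ℂ) * (((l:ℂ)^2 + Complex.I * l * Q) ^ (α : ℂ)))‖
          ≤ Real.exp (-(κ * t * |l| ^ α * (1 + |l|) ^ α)) ∧
        Real.exp (-(κ * t * |l| ^ α * (1 + |l|) ^ α)) ≤ Real.exp (-(κ * t * |l| ^ α))) := by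
  obtain ⟨hα0, hα1⟩ := hα
  have hπ := Real.pi_pos
  set c : ℝ := Real.sqrt (min 1 (Q^2) / 2) with hc
  have hminpos : (0:ℝ) < min 1 (Q^2) / 2 := by
    have : (0:ℝ) < min 1 (Q^2) := lt_min one_pos (by positivity)
    linarith
  have hcpos : 0 < c := Real.sqrt_pos.mpr hminpos
  have hcos : 0 < Real.cos (α * (π/2)) := by
    apply Real.cos_pos_of_mem_Ioo
    constructor
    · nlinarith
    · nlinarith
  set κ : ℝ := Real.cos (α * (π/2)) * c ^ α with hκ
  have hκpos : 0 < κ := by positivity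
  have hmain : ∀ l : ℝ,
      κ * |l| ^ α * (1 + |l|) ^ α ≤ ((((l:ℂ)^2 + Complex.I * l * Q)) ^ (α : ℂ)).re := by
    intro l
    rcases eq_or_ne l 0 with rfl | hl
    · have hαne : (α:ℂ) ≠ 0 := by exact_mod_cast hα0.ne'
      simp [Complex.zero_cpow hαne, Real.zero_rpow hα0.ne']
    · set z : ℂ := (l:ℂ)^2 + Complex.I * l * Q with hzdef
      have hlpos : 0 < |l| := abs_pos.mpr hl
      have hzre' : z.re = l^2 := by simp [hzdef, ← Complex.ofReal_pow]
      have hzne : z ≠ 0 := by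
        intro h
        rw [h] at hzre'
        simp at hzre'
        exact hl (pow_eq_zero_iff (by norm_num) |>.mp hzre'.symm)
      have hzre : 0 ≤ z.re := by rw [hzre']; positivity
      have habs : ‖z‖ = |l| * Real.sqrt (l^2 + Q^2) := by
        have : z = (l:ℂ) * ((l:ℂ) + (Q:ℝ) * Complex.I) := by rw [hzdef]; ring
        rw [this, norm_mul, Complex.norm_real, Real.norm_eq_abs, Complex.norm_add_mul_I]
      set s : ℝ := Real.sqrt (l^2 + Q^2) with hs
      have hspos : 0 < s := Real.sqrt_pos.mpr (by positivity)
      -- compute the real part of z ^ α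
      have hre : ((z) ^ (α:ℂ)).re = ‖z‖ ^ α * Real.cos (z.arg * α) := by
        rw [Complex.cpow_def_of_ne_zero hzne, Complex.exp_re]
        have h1 : (Complex.log z * (α:ℂ)).re = Real.log ‖z‖ * α := by
          simp [Complex.mul_re, Complex.log_re]
        have h2 : (Complex.log z * (α:ℂ)).im = z.arg * α := by
          simp [Complex.mul_im, Complex.log_im]
        rw [h1, h2, ← Real.rpow_def_of_pos (norm_pos_iff.mpr hzne)]
      rw [hre, habs]
      have harg : |z.arg| ≤ π/2 := Complex.abs_arg_le_pi_div_two_iff.mpr hzre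
      have hcosle : Real.cos (α * (π/2)) ≤ Real.cos (z.arg * α) := by
        have : Real.cos (z.arg * α) = Real.cos (|z.arg * α|) := (Real.cos_abs _).symm
        rw [this]
        apply Real.cos_le_cos_of_nonneg_of_le_pi (abs_nonneg _) (by nlinarith)
        have : |z.arg * α| = |z.arg| * α := by
          rw [abs_mul, _root_.abs_of_nonneg hα0.le]
        rw [this]
        nlinarith [abs_nonneg z.arg]
      have hcsle : (c * (1 + |l|)) ^ α ≤ s ^ α := by
        apply Real.rpow_le_rpow (by positivity)
        · have h1 : c * (1 + |l|) = Real.sqrt (min 1 (Q^2) / 2 * (1 + |l|)^2) := by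
            rw [Real.sqrt_mul hminpos.le, Real.sqrt_sq (by positivity)]
          rw [h1, hs]
          apply Real.sqrt_le_sqrt
          have hm1 : min 1 (Q^2) ≤ 1 := min_le_left _ _
          have hm2 : min 1 (Q^2) ≤ Q^2 := min_le_right _ _
          have hmn : 0 < min 1 (Q^2) := lt_min one_pos (by positivity)
          have hsq : |l|^2 = l^2 := sq_abs l
          nlinarith [abs_nonneg l, sq_nonneg (1 - |l|)]
        · exact hα0.le
      have hmul : (|l| * s) ^ α = |l| ^ α * s ^ α :=
        Real.mul_rpow (abs_nonneg l) hspos.le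
      rw [hmul]
      have hcrw : c ^ α * (1 + |l|) ^ α = (c * (1 + |l|)) ^ α :=
        (Real.mul_rpow hcpos.le (by positivity)).symm
      calc κ * |l| ^ α * (1 + |l|) ^ α
          = Real.cos (α * (π/2)) * ((c * (1 + |l|)) ^ α * |l| ^ α) := by
            rw [← hcrw, hκ]; ring
        _ ≤ Real.cos (z.arg * α) * (s ^ α * |l| ^ α) := by
            apply mul_le_mul hcosle _ (by positivity) (le_of_lt (lt_of_lt_of_le hcos hcosle))
            exact mul_le_mul_of_nonneg_right hcsle (by positivity)
        _ = |l| ^ α * s ^ α * Real.cos (z.arg * α) := by ring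
  refine ⟨κ, hκpos, hmain, ?_⟩
  intro t ht l
  have hA : (0:ℝ) ≤ |l| ^ α := Real.rpow_nonneg (abs_nonneg l) α
  have hB : (1:ℝ) ≤ (1 + |l|) ^ α := by
    calc (1:ℝ) = 1 ^ α := (Real.one_rpow α).symm
      _ ≤ (1 + |l|) ^ α :=
        Real.rpow_le_rpow one_pos.le (by nlinarith [abs_nonneg l]) hα0.le
  constructor
  · rw [Complex.norm_exp]
    apply Real.exp_le_exp.mpr
    have hre : (-(t:ℂ) * (((l:ℂ)^2 + Complex.I * l * Q) ^ (α : ℂ))).re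
        = -(t * ((((l:ℂ)^2 + Complex.I * l * Q)) ^ (α : ℂ)).re) := by
      rw [neg_mul, Complex.neg_re, Complex.re_ofReal_mul]
    rw [hre]
    have := hmain l
    nlinarith
  · apply Real.exp_le_exp.mpr
    have h : κ * t * |l| ^ α * 1 ≤ κ * t * |l| ^ α * (1 + |l|) ^ α := by
      apply mul_le_mul_of_nonneg_left hB (by positivity)
    linarith
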